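/- Let p_sc(x) = (1/(2π))·√(4 − x²)·𝟙_{[−2,2]}(x) be the density of the semicircle distribution and let G(z) = ∫_ℝ (z−x)⁻¹ p_sc(x) dx be its Stieltjes transform, defined for z ∈ ℂ with Im z ≠ 0. Then G(z)² − z·G(z) + 1 = 0 for all such z. -/

import Mathlib

open MeasureTheory

/-- Density of the standard semicircle distribution. -/
noncomputable def psc (x : ℝ) : ℝ :=
  if x ∈ Set.Icc (-2 : ℝ) 2 then Real.sqrt (4 - x ^ 2) / (2 * Real.pi) else 0

namespace SCP

open Complex Filter Topology Set intervalIntegral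


noncomputable def gam (z : ℂ) : ℂ := Complex.exp (Complex.log ((z-2)/(z+2)) / 2)

section
variable {z : ℂ} {x : ℝ}

lemma hzx (hz : z.im ≠ 0) (x : ℝ) : z - (x:ℂ) ≠ 0 := fun h => hz (by
  have := congrArg Complex.im h; simpa using this)

lemma hzp2 (hz : z.im ≠ 0) : z + 2 ≠ 0 := fun h => hz (by
  have := congrArg Complex.im h; simpa using this)

lemma hw_im (hz : z.im ≠ 0) : ((z-2)/(z+2)).im ≠ 0 := by
  intro h
  set w := (z-2)/(z+2) with hw
  have h1 : z - 2 = w * (z + 2) := by rw [hw, div_mul_cancel₀ _ (hzp2 hz)]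
  have h2 : z.im = w.re * z.im := by
    have := congrArg Complex.im h1
    simpa [Complex.mul_im, h] using this
  have h3 : w.re = 1 := by
    rcases mul_eq_mul_right_iff.mp (by linarith [h2] : w.re * z.im = 1 * z.im) with h' | h'
    · exact h'
    · exact absurd h' hz
  have h4 : w = 1 := Complex.ext (by simp [h3]) (by simp [h])
  rw [h4, one_mul] at h1
  have := congrArg Complex.re h1
  simp at this
  linarith

lemma hw0 (hz : z.im ≠ 0) : (z-2)/(z+2) ≠ 0 := fun h => hw_im hz (by simp [h])

lemma gam_sq (hz : z.im ≠ 0) : gam z ^ 2 = (z-2)/(z+2) := by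
  rw [gam, sq, ← Complex.exp_add, add_halves, Complex.exp_log (hw0 hz)]

lemma gam_ne (z : ℂ) : gam z ≠ 0 := Complex.exp_ne_zero _

lemma gam_re_pos (hz : z.im ≠ 0) : 0 < (gam z).re := by
  rw [gam, Complex.exp_re]
  refine mul_pos (Real.exp_pos _) (Real.cos_pos_of_mem_Ioo ⟨?_, ?_⟩)
  · have h1 : -Real.pi < ((z-2)/(z+2)).arg := Complex.neg_pi_lt_arg _
    have h2 : (Complex.log ((z-2)/(z+2)) / 2).im = ((z-2)/(z+2)).arg / 2 := by
      simp [Complex.div_im, Complex.log_im]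
    rw [h2]; linarith
  · have h1 : ((z-2)/(z+2)).arg ≤ Real.pi := Complex.arg_le_pi _
    have h1' : ((z-2)/(z+2)).arg ≠ Real.pi := by
      intro h
      rcases Complex.arg_eq_pi_iff.mp h with ⟨_, h2⟩
      exact hw_im hz h2
    have h2 : (Complex.log ((z-2)/(z+2)) / 2).im = ((z-2)/(z+2)).arg / 2 := by
      simp [Complex.div_im, Complex.log_im]
    rw [h2]
    have := lt_of_le_of_ne h1 h1'
    linarith

lemma gam_hg2 (hz : z.im ≠ 0) : gam z ^ 2 * (z + 2) = z - 2 :=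
  (eq_div_iff (hzp2 hz)).mp (gam_sq hz)

lemma log_diff (hz : z.im ≠ 0) :
    Complex.log (I * gam z) - Complex.log (-(I * gam z)) = Real.pi * I := by
  have hv : 0 < (I * gam z).im := by simpa using gam_re_pos hz
  rw [Complex.log, Complex.log, norm_neg, Complex.arg_neg_eq_arg_sub_pi_of_im_pos hv]
  push_cast
  ring


/-- antiderivative of t ↦ 2/((z+2)t²+(z-2)) -/
noncomputable def Afun (z : ℂ) (t : ℝ) : ℂ :=
  (I * gam z * (z+2))⁻¹ * (Complex.log (t - I * gam z) - Complex.log (t + I * gam z))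



lemma tmIg_ne (hz : z.im ≠ 0) (t : ℝ) : (t : ℂ) - I * gam z ≠ 0 := fun h => by
  have := congrArg Complex.im h
  simp at this
  exact absurd this (ne_of_gt (gam_re_pos hz))

lemma tpIg_ne (hz : z.im ≠ 0) (t : ℝ) : (t : ℂ) + I * gam z ≠ 0 := fun h => by
  have := congrArg Complex.im h
  simp at this
  exact absurd this (ne_of_gt (gam_re_pos hz))

lemma den_factor (hz : z.im ≠ 0) (t : ℝ) :
    (z+2) * (((t:ℂ) - I * gam z) * ((t:ℂ) + I * gam z)) = (z+2) * t^2 + (z-2) := by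
  have h := gam_hg2 hz
  have hI : (I:ℂ)^2 = -1 := Complex.I_sq
  linear_combination h - (z+2) * (gam z)^2 * hI

lemma den_ne (hz : z.im ≠ 0) (t : ℝ) : (z+2) * t^2 + (z-2) ≠ 0 := by
  rw [← den_factor hz t]
  exact mul_ne_zero (hzp2 hz) (mul_ne_zero (tmIg_ne hz t) (tpIg_ne hz t))

lemma Afun_hasDerivAt (hz : z.im ≠ 0) (t : ℝ) :
    HasDerivAt (Afun z) (2 / ((z+2) * t^2 + (z-2))) t := by
  have hm : ((t:ℂ) - I * gam z) ∈ Complex.slitPlane := by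
    refine Or.inr ?_
    simp
    exact ne_of_gt (gam_re_pos hz)
  have hp : ((t:ℂ) + I * gam z) ∈ Complex.slitPlane := by
    refine Or.inr ?_
    simp
    exact ne_of_gt (gam_re_pos hz)
  have d1 : HasDerivAt (fun s : ℝ => Complex.log ((s:ℂ) - I * gam z))
      (((t:ℂ) - I * gam z)⁻¹) t := by
    have inner : HasDerivAt (fun w : ℂ => w - I * gam z) 1 (t : ℂ) :=
      (hasDerivAt_id _).sub_const _
    have := ((Complex.hasDerivAt_log hm).comp (t:ℂ) inner).comp_ofReal
    simpa using this
  have d2 : HasDerivAt (fun s : ℝ => Complex.log ((s:ℂ) + I * gam z))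
      (((t:ℂ) + I * gam z)⁻¹) t := by
    have inner : HasDerivAt (fun w : ℂ => w + I * gam z) 1 (t : ℂ) :=
      (hasDerivAt_id _).add_const _
    have := ((Complex.hasDerivAt_log hp).comp (t:ℂ) inner).comp_ofReal
    simpa using this
  have d3 := ((d1.sub d2).const_mul ((I * gam z * (z+2))⁻¹))
  refine d3.congr_deriv ?_
  symm
  have h1 := tmIg_ne hz t
  have h2 := tpIg_ne hz t
  have h3 := hzp2 hz
  have h4 := gam_ne z
  have h5 := den_ne hz t
  have h6 := den_factor hz t
  rw [← h6]
  have hI : (I:ℂ) ≠ 0 := Complex.I_ne_zero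
  field_simp
  ring

noncomputable def Phi (z : ℂ) (x : ℝ) : ℂ :=
  (z^2 - 4) * Afun z (Real.sqrt ((2-x)/(2+x))) + z * (Real.arcsin (x/2) : ℂ)
    - (Real.sqrt (4 - x^2) : ℂ)



lemma tt_sq (hx : x ∈ Ioo (-2:ℝ) 2) :
    Real.sqrt ((2-x)/(2+x)) ^ 2 = (2-x)/(2+x) :=
  Real.sq_sqrt (div_nonneg (by linarith [hx.2]) (by linarith [hx.1]))

lemma tt_pos (hx : x ∈ Ioo (-2:ℝ) 2) : 0 < Real.sqrt ((2-x)/(2+x)) :=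
  Real.sqrt_pos.mpr (div_pos (by linarith [hx.2]) (by linarith [hx.1]))

lemma tt_mul (hx : x ∈ Ioo (-2:ℝ) 2) :
    Real.sqrt ((2-x)/(2+x)) * (2+x) = Real.sqrt (4 - x^2) := by
  have h2p : (0:ℝ) < 2 + x := by linarith [hx.1]
  have h2m : (0:ℝ) < 2 - x := by linarith [hx.2]
  have h : (4:ℝ) - x^2 = (Real.sqrt ((2-x)/(2+x)) * (2+x))^2 := by
    rw [mul_pow, Real.sq_sqrt (div_nonneg h2m.le h2p.le)]
    field_simp
    ring
  rw [h, Real.sqrt_sq (by positivity)]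

lemma tt_hasDerivAt (hx : x ∈ Ioo (-2:ℝ) 2) :
    HasDerivAt (fun y : ℝ => Real.sqrt ((2-y)/(2+y)))
      (-2 / (Real.sqrt ((2-x)/(2+x)) * (2+x)^2)) x := by
  have h2p : (0:ℝ) < 2 + x := by linarith [hx.1]
  have h2m : (0:ℝ) < 2 - x := by linarith [hx.2]
  have hq : HasDerivAt (fun y : ℝ => (2-y)/(2+y)) (-4/(2+x)^2) x := by
    have h1 : HasDerivAt (fun y : ℝ => 2 - y) (-1) x := by
      simpa using (hasDerivAt_id' x).const_sub (2:ℝ)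
    have h2 : HasDerivAt (fun y : ℝ => 2 + y) 1 x := by
      simpa using (hasDerivAt_id' x).const_add (2:ℝ)
    have := h1.div h2 (ne_of_gt h2p)
    refine this.congr_deriv ?_
    symm
    field_simp
    ring
  have hq0 : (2-x)/(2+x) ≠ 0 := ne_of_gt (div_pos h2m h2p)
  have := (Real.hasDerivAt_sqrt hq0).comp x hq
  refine this.congr_deriv ?_
  symm
  have := tt_pos hx
  field_simp
  ring

lemma Phi_hasDerivAt (hz : z.im ≠ 0) (hx : x ∈ Ioo (-2:ℝ) 2) :
    HasDerivAt (Phi z) ((z - x)⁻¹ * (Real.sqrt (4 - x^2) : ℂ)) x := by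
  have h2p : (0:ℝ) < 2 + x := by linarith [hx.1]
  have h2m : (0:ℝ) < 2 - x := by linarith [hx.2]
  have hs4 : (0:ℝ) < 4 - x^2 := by nlinarith [hx.1, hx.2]
  set τ := Real.sqrt ((2-x)/(2+x)) with hτ
  have hτpos := tt_pos hx
  -- F part
  have hF : HasDerivAt (fun y : ℝ => Afun z (Real.sqrt ((2-y)/(2+y))))
      ((-2 / (τ * (2+x)^2)) • (2 / ((z+2) * τ^2 + (z-2)))) x :=
    by have := (Afun_hasDerivAt hz τ).scomp x (tt_hasDerivAt hx); exact this
  -- arcsin part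
  have harc : HasDerivAt (fun y : ℝ => Real.arcsin (y/2))
      (1 / Real.sqrt (1 - (x/2)^2) * (2:ℝ)⁻¹) x := by
    have hne1 : x/2 ≠ -1 := by intro h; rw [div_eq_iff (by norm_num : (2:ℝ) ≠ 0)] at h; linarith [hx.1]
    have hne2 : x/2 ≠ 1 := by intro h; rw [div_eq_iff (by norm_num : (2:ℝ) ≠ 0)] at h; linarith [hx.2]
    have hinner : HasDerivAt (fun y : ℝ => y/2) (2:ℝ)⁻¹ x := by
      simpa using (hasDerivAt_id x).div_const 2
    exact (Real.hasDerivAt_arcsin hne1 hne2).comp x hinner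
  have harcC : HasDerivAt (fun y : ℝ => ((Real.arcsin (y/2) : ℝ) : ℂ))
      ((1 / Real.sqrt (1 - (x/2)^2) * (2:ℝ)⁻¹ : ℝ) : ℂ) x := harc.ofReal_comp
  -- sqrt part
  have hsq : HasDerivAt (fun y : ℝ => Real.sqrt (4 - y^2))
      (1 / (2 * Real.sqrt (4 - x^2)) * (-(2*x))) x := by
    have hinner : HasDerivAt (fun y : ℝ => 4 - y^2) (-(2*x)) x := by
      have := ((hasDerivAt_pow 2 x).const_sub 4)
      simpa using this
    exact (Real.hasDerivAt_sqrt (ne_of_gt hs4)).comp x hinner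
  have hsqC : HasDerivAt (fun y : ℝ => ((Real.sqrt (4 - y^2) : ℝ) : ℂ))
      ((1 / (2 * Real.sqrt (4 - x^2)) * (-(2*x)) : ℝ) : ℂ) x := hsq.ofReal_comp
  have hD := ((hF.const_mul (z^2-4)).add (harcC.const_mul z)).sub hsqC
  refine hD.congr_deriv ?_
  symm
  -- now the algebraic identity
  have hspos : (0:ℝ) < Real.sqrt (4 - x^2) := Real.sqrt_pos.mpr hs4
  set s := Real.sqrt (4 - x^2) with hs
  have hs2 : (s:ℂ)^2 = 4 - (x:ℂ)^2 := by
    have h : s^2 = 4 - x^2 := Real.sq_sqrt hs4.le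
    exact_mod_cast congrArg (fun r : ℝ => (r : ℂ)) h
  have hts : (τ:ℂ) * (2 + x) = s := by
    exact_mod_cast congrArg (fun r : ℝ => (r : ℂ)) (tt_mul hx)

  have h14 : Real.sqrt (1 - (x/2)^2) = s / 2 := by
    rw [show (1:ℝ) - (x/2)^2 = (4 - x^2)/4 by ring, Real.sqrt_div hs4.le,
      show Real.sqrt 4 = 2 by rw [show (4:ℝ) = 2^2 by norm_num, Real.sqrt_sq]; norm_num]
  rw [h14]
  have hzx' := hzx hz x
  have hzp2' := hzp2 hz
  have hden := den_ne hz τ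
  have h2pC : (2 + (x:ℂ)) ≠ 0 := by
    intro h
    have := congrArg Complex.re h
    simp at this
    linarith
  have hsC : (s:ℂ) ≠ 0 := Complex.ofReal_ne_zero.mpr (ne_of_gt hspos)
  have hτC : (τ:ℂ) ≠ 0 := Complex.ofReal_ne_zero.mpr (ne_of_gt hτpos)
  have hτval : (τ:ℂ) = s / (2 + x) := by
    rw [eq_div_iff h2pC]; exact hts
  have hτ2C : (τ:ℂ)^2 * (2 + x) = 2 - x := by
    have h : τ^2 * (2+x) = 2 - x := by
      rw [tt_sq hx]; field_simp
    exact_mod_cast congrArg (fun r : ℝ => (r : ℂ)) h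
  have hdv : ((z+2) * (τ:ℂ)^2 + (z-2)) * (2 + x) = 4 * (z - x) := by
    linear_combination (z+2) * hτ2C
  have hdv' : (2:ℂ) / ((z+2) * (τ:ℂ)^2 + (z-2)) = (2 + x) / (2 * (z - x)) := by
    rw [div_eq_div_iff hden (by exact mul_ne_zero two_ne_zero hzx')]
    linear_combination -hdv
  have t1 : (z^2-4) * ((-2 / (τ * (2+x)^2) : ℝ) • ((2:ℂ) / ((z+2) * (τ:ℂ)^2 + (z-2))))
      = -(z^2-4) / ((s:ℂ) * (z - (x:ℂ))) := by
    rw [Complex.real_smul, hdv']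
    push_cast
    rw [hτval]
    field_simp
  have t2 : z * ((1 / (s/2) * (2:ℝ)⁻¹ : ℝ) : ℂ) = z / s := by
    rw [show (1 / (s/2) * (2:ℝ)⁻¹ : ℝ) = 1/s by field_simp]
    push_cast
    ring
  have t3 : ((1 / (2*s) * (-(2*x)) : ℝ) : ℂ) = -((x:ℂ) / s) := by
    rw [show (1 / (2*s) * (-(2*x)) : ℝ) = -(x/s) by field_simp]
    push_cast
    ring
  rw [t1, t2, t3]
  field_simp
  linear_combination hs2

lemma slit_m (hz : z.im ≠ 0) (t : ℝ) : ((t:ℂ) - I * gam z) ∈ Complex.slitPlane := by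
  refine Or.inr ?_
  simp
  exact ne_of_gt (gam_re_pos hz)

lemma slit_p (hz : z.im ≠ 0) (t : ℝ) : ((t:ℂ) + I * gam z) ∈ Complex.slitPlane := by
  refine Or.inr ?_
  simp
  exact ne_of_gt (gam_re_pos hz)

lemma sqrt_tendsto_atTop : Tendsto Real.sqrt atTop atTop := by
  apply tendsto_atTop_atTop.mpr
  intro b
  refine ⟨b^2 ⊔ 0, fun a ha => ?_⟩
  calc b ≤ |b| := le_abs_self b
  _ = Real.sqrt (b^2) := (Real.sqrt_sq_eq_abs b).symm
  _ ≤ Real.sqrt a := Real.sqrt_le_sqrt (le_trans le_sup_left ha)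

/-- value of Phi at 2 -/
lemma Phi_two (hz : z.im ≠ 0) :
    Phi z 2 = z * (Real.pi/2 : ℝ) - Real.pi * (gam z * (z+2)) := by
  have h0 : Real.sqrt ((2-(2:ℝ))/(2+2)) = 0 := by norm_num
  have h1 : Real.sqrt (4 - (2:ℝ)^2) = 0 := by norm_num
  rw [Phi, h0, h1]
  have hA0 : Afun z 0 = (I * gam z * (z+2))⁻¹ * (-(Real.pi * I)) := by
    rw [Afun]
    have e1 : ((0:ℝ):ℂ) - I * gam z = -(I * gam z) := by push_cast; ring
    have e2 : ((0:ℝ):ℂ) + I * gam z = I * gam z := by push_cast; ring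
    rw [e1, e2]
    rw [show Complex.log (-(I * gam z)) - Complex.log (I * gam z)
       = -(Complex.log (I * gam z) - Complex.log (-(I * gam z))) by ring, log_diff hz]
  rw [hA0, show (2:ℝ)/2 = 1 by norm_num, Real.arcsin_one]
  have hg2 := gam_hg2 hz
  have h3 := hzp2 hz
  have h4 := gam_ne z
  have hI : (I:ℂ) ≠ 0 := Complex.I_ne_zero
  have e : (I * gam z * (z+2))⁻¹ * (-((Real.pi:ℂ) * I)) = -(Real.pi:ℂ) / (gam z * (z+2)) := by
    field_simp
  rw [e]
  have e2 : (z^2 - 4) * (-(Real.pi:ℂ) / (gam z * (z+2))) = -(Real.pi:ℂ) * (gam z * (z+2)) := by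
    rw [mul_div_assoc', div_eq_iff (mul_ne_zero h4 h3)]
    linear_combination (Real.pi:ℂ) * (z+2) * hg2
  rw [e2]
  push_cast
  ring

lemma Afun_contAt (hz : z.im ≠ 0) (t : ℝ) : ContinuousAt (Afun z) t := by
  apply ContinuousAt.mul continuousAt_const
  apply ContinuousAt.sub
  · have hin : ContinuousAt (fun x : ℝ => (x:ℂ) - I * gam z) t := by fun_prop
    have := ContinuousAt.comp (f := fun x : ℝ => (x:ℂ) - I * gam z) (x := t) (continuousAt_clog (slit_m hz t)) hin
    simpa [Function.comp_def] using this
  · have hin : ContinuousAt (fun x : ℝ => (x:ℂ) + I * gam z) t := by fun_prop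
    have := ContinuousAt.comp (f := fun x : ℝ => (x:ℂ) + I * gam z) (x := t) (continuousAt_clog (slit_p hz t)) hin
    simpa [Function.comp_def] using this

lemma Phi_tendsto_right (hz : z.im ≠ 0) :
    Tendsto (Phi z) (𝓝[<] (2:ℝ)) (𝓝 (Phi z 2)) := by
  have cq : ContinuousAt (fun y : ℝ => (2-y)/(2+y)) 2 :=
    ContinuousAt.div (by fun_prop) (by fun_prop) (by norm_num)
  have ctt : ContinuousAt (fun y : ℝ => Real.sqrt ((2-y)/(2+y))) 2 :=
    Real.continuous_sqrt.continuousAt.comp cq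
  have cPhi : ContinuousAt (Phi z) 2 := by
    unfold Phi
    apply ContinuousAt.sub
    · apply ContinuousAt.add
      · exact continuousAt_const.mul ((Afun_contAt hz _).comp ctt)
      · exact continuousAt_const.mul (Complex.continuous_ofReal.continuousAt.comp
          (Real.continuous_arcsin.continuousAt.comp (by fun_prop)))
    · fun_prop
  exact cPhi.continuousWithinAt.tendsto

lemma Afun_tendsto_atTop (hz : z.im ≠ 0) : Tendsto (Afun z) atTop (𝓝 0) := by
  set u := I * gam z with hu
  have huim : u.im = (gam z).re := by simp [hu]
  have l0 : Tendsto (fun t : ℝ => ((t:ℂ))⁻¹) atTop (𝓝 0) := by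
    have := (Complex.continuous_ofReal.tendsto 0).comp tendsto_inv_atTop_zero
    simpa [Function.comp_def, Complex.ofReal_inv] using this
  have l1 : Tendsto (fun t : ℝ => 1 - u * ((t:ℂ))⁻¹) atTop (𝓝 1) := by
    have := (tendsto_const_nhds : Tendsto (fun _ : ℝ => (1:ℂ)) atTop (𝓝 1)).sub
      (l0.const_mul u)
    simpa using this
  have l2 : Tendsto (fun t : ℝ => 1 + u * ((t:ℂ))⁻¹) atTop (𝓝 1) := by
    have := (tendsto_const_nhds : Tendsto (fun _ : ℝ => (1:ℂ)) atTop (𝓝 1)).add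
      (l0.const_mul u)
    simpa using this
  have hc : ContinuousAt Complex.log 1 := continuousAt_clog Complex.one_mem_slitPlane
  have hlog : Tendsto (fun t : ℝ =>
      Complex.log (1 - u * ((t:ℂ))⁻¹) - Complex.log (1 + u * ((t:ℂ))⁻¹)) atTop (𝓝 0) := by
    have := (hc.tendsto.comp l1).sub (hc.tendsto.comp l2)
    simpa [Complex.log_one] using this
  have heq : ∀ᶠ t : ℝ in atTop, (I * gam z * (z+2))⁻¹ *
      (Complex.log (1 - u * ((t:ℂ))⁻¹) - Complex.log (1 + u * ((t:ℂ))⁻¹)) = Afun z t := by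
    filter_upwards [eventually_gt_atTop (0:ℝ)] with t ht
    have htC : ((t:ℂ)) ≠ 0 := Complex.ofReal_ne_zero.mpr (ne_of_gt ht)
    have hm0 : (1 : ℂ) - u * ((t:ℂ))⁻¹ ≠ 0 := by
      intro h
      have := congrArg Complex.im h
      simp [huim] at this
      rcases this with h' | h'
      · exact ne_of_gt (gam_re_pos hz) h'
      · exact ne_of_gt ht (by exact_mod_cast h')
    have hp0 : (1 : ℂ) + u * ((t:ℂ))⁻¹ ≠ 0 := by
      intro h
      have := congrArg Complex.im h
      simp [huim] at this
      rcases this with h' | h'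
      · exact ne_of_gt (gam_re_pos hz) h'
      · exact ne_of_gt ht (by exact_mod_cast h')
    have em : ((t:ℂ)) - u = (t:ℝ) * (1 - u * ((t:ℂ))⁻¹) := by
      push_cast
      field_simp
    have ep : ((t:ℂ)) + u = (t:ℝ) * (1 + u * ((t:ℂ))⁻¹) := by
      push_cast
      field_simp
    rw [Afun, ← hu, em, ep, Complex.log_ofReal_mul ht hm0, Complex.log_ofReal_mul ht hp0]
    ring
  have := (tendsto_const_nhds (x := (I * gam z * (z+2))⁻¹)).mul hlog
  rw [mul_zero] at this
  exact Tendsto.congr' heq this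

lemma tt_tendsto_atTop : Tendsto (fun x : ℝ => Real.sqrt ((2-x)/(2+x))) (𝓝[>] (-2:ℝ)) atTop := by
  apply sqrt_tendsto_atTop.comp
  have h2 : Tendsto (fun x : ℝ => 2+x) (𝓝[>] (-2:ℝ)) (𝓝[>] 0) := by
    apply tendsto_nhdsWithin_of_tendsto_nhds_of_eventually_within
    · have : ContinuousAt (fun x : ℝ => 2+x) (-2) := by fun_prop
      have h := this.continuousWithinAt (s := Ioi (-2:ℝ)) |>.tendsto
      simpa using h
    · filter_upwards [self_mem_nhdsWithin] with x hx
      simp only [mem_Ioi] at hx ⊢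
      linarith
  have h3 : Tendsto (fun x : ℝ => (2+x)⁻¹) (𝓝[>] (-2:ℝ)) atTop :=
    tendsto_inv_nhdsGT_zero.comp h2
  have h4 : Tendsto (fun x : ℝ => 2-x) (𝓝[>] (-2:ℝ)) (𝓝 4) := by
    have : ContinuousAt (fun x : ℝ => 2-x) (-2) := by fun_prop
    have h := this.continuousWithinAt (s := Ioi (-2:ℝ)) |>.tendsto
    norm_num at h
    exact h
  have := Filter.Tendsto.pos_mul_atTop (by norm_num : (0:ℝ) < 4) h4 h3
  simpa [div_eq_mul_inv] using this

lemma Phi_tendsto_left (hz : z.im ≠ 0) :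
    Tendsto (Phi z) (𝓝[>] (-2:ℝ)) (𝓝 (z * ((-(Real.pi/2) : ℝ) : ℂ))) := by
  unfold Phi
  have t1 : Tendsto (fun x : ℝ => (z^2-4) * Afun z (Real.sqrt ((2-x)/(2+x))))
      (𝓝[>] (-2:ℝ)) (𝓝 0) := by
    have := (tendsto_const_nhds (x := z^2-4)).mul
      ((Afun_tendsto_atTop hz).comp tt_tendsto_atTop)
    simpa using this
  have t2 : Tendsto (fun x : ℝ => z * ((Real.arcsin (x/2) : ℝ) : ℂ))
      (𝓝[>] (-2:ℝ)) (𝓝 (z * ((-(Real.pi/2) : ℝ) : ℂ))) := by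
    have harc : ContinuousAt (fun x : ℝ => Real.arcsin (x/2)) (-2) := by
      exact Real.continuous_arcsin.continuousAt.comp (by fun_prop)
    have : ContinuousAt (fun x : ℝ => z * ((Real.arcsin (x/2) : ℝ) : ℂ)) (-2) :=
      continuousAt_const.mul ((Complex.continuous_ofReal.continuousAt).comp harc)
    have h := this.continuousWithinAt (s := Ioi (-2:ℝ)) |>.tendsto
    have harcval : Real.arcsin ((-2:ℝ)/2) = -(Real.pi/2) := by
      norm_num [Real.arcsin_neg_one]
    simpa [harcval] using h
  have t3 : Tendsto (fun x : ℝ => ((Real.sqrt (4 - x^2) : ℝ) : ℂ))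
      (𝓝[>] (-2:ℝ)) (𝓝 0) := by
    have : ContinuousAt (fun x : ℝ => ((Real.sqrt (4 - x^2) : ℝ) : ℂ)) (-2) := by fun_prop
    have h := this.continuousWithinAt (s := Ioi (-2:ℝ)) |>.tendsto
    norm_num at h
    exact h
  have := (t1.add t2).sub t3
  simpa using this

lemma key_integral (hz : z.im ≠ 0) :
    ∫ x in (-2:ℝ)..2, (z - x)⁻¹ * (Real.sqrt (4-x^2) : ℂ)
      = Real.pi * z - Real.pi * (gam z * (z+2)) := by
  have hcont : Continuous (fun x : ℝ => (z - x)⁻¹ * (Real.sqrt (4-x^2) : ℂ)) := by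
    apply Continuous.mul
    · exact Continuous.inv₀ (by fun_prop) (fun x => hzx hz x)
    · fun_prop
  have hint : IntervalIntegrable (fun x : ℝ => (z - x)⁻¹ * (Real.sqrt (4-x^2) : ℂ))
      volume (-2:ℝ) 2 := hcont.intervalIntegrable _ _
  rw [intervalIntegral.integral_eq_sub_of_hasDerivAt_of_tendsto (by norm_num)
    (fun x hx => Phi_hasDerivAt hz hx) hint (Phi_tendsto_left hz) (Phi_tendsto_right hz),
    Phi_two hz]
  push_cast
  ring


end

end SCP

theorem stmt_6 (z : ℂ) (hz : z.im ≠ 0) :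
    (∫ x : ℝ, (z - (x : ℂ))⁻¹ * (psc x : ℂ)) ^ 2
      - z * (∫ x : ℝ, (z - (x : ℂ))⁻¹ * (psc x : ℂ)) + 1 = 0 := by
  have hπ : (Real.pi : ℂ) ≠ 0 := Complex.ofReal_ne_zero.mpr Real.pi_ne_zero
  have hG : (∫ x : ℝ, (z - (x : ℂ))⁻¹ * (psc x : ℂ)) = (z - SCP.gam z * (z+2)) / 2 := by
    have hind : ∀ x : ℝ, (z - (x:ℂ))⁻¹ * (psc x : ℂ)
        = Set.indicator (Set.Icc (-2:ℝ) 2)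
            (fun x : ℝ => ((2*Real.pi : ℝ) : ℂ)⁻¹ * ((z - x)⁻¹ * (Real.sqrt (4-x^2) : ℂ))) x := by
      intro x
      by_cases h : x ∈ Set.Icc (-2:ℝ) 2
      · rw [Set.indicator_of_mem h, psc, if_pos h]
        push_cast
        ring
      · rw [Set.indicator_of_notMem h, psc, if_neg h]
        simp
    calc (∫ x : ℝ, (z - (x:ℂ))⁻¹ * (psc x : ℂ))
        = ∫ x : ℝ, Set.indicator (Set.Icc (-2:ℝ) 2)
            (fun x : ℝ => ((2*Real.pi : ℝ) : ℂ)⁻¹ * ((z - x)⁻¹ * (Real.sqrt (4-x^2) : ℂ))) x := by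
          simp_rw [hind]
      _ = ∫ x in Set.Icc (-2:ℝ) 2,
            ((2*Real.pi : ℝ) : ℂ)⁻¹ * ((z - x)⁻¹ * (Real.sqrt (4-x^2) : ℂ)) :=
          integral_indicator measurableSet_Icc
      _ = ∫ x in Set.Ioc (-2:ℝ) 2,
            ((2*Real.pi : ℝ) : ℂ)⁻¹ * ((z - x)⁻¹ * (Real.sqrt (4-x^2) : ℂ)) :=
          integral_Icc_eq_integral_Ioc
      _ = ∫ x in (-2:ℝ)..2,
            ((2*Real.pi : ℝ) : ℂ)⁻¹ * ((z - x)⁻¹ * (Real.sqrt (4-x^2) : ℂ)) :=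
          (intervalIntegral.integral_of_le (by norm_num)).symm
      _ = ((2*Real.pi : ℝ) : ℂ)⁻¹ * ∫ x in (-2:ℝ)..2, (z - x)⁻¹ * (Real.sqrt (4-x^2) : ℂ) :=
          intervalIntegral.integral_const_mul _ _
      _ = (z - SCP.gam z * (z+2)) / 2 := by
          rw [SCP.key_integral hz]
          push_cast
          field_simp
  rw [hG]
  linear_combination ((z+2)/4) * SCP.gam_hg2 hz
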